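/- Let f: Z^n → ℝ have ℓ₂-sensitivity Δ₂(f) = sup over neighboring datasets D ∼ D' of |f(D) − f(D')|. Let U ∼ N(0, σ²) with σ ≥ (1/ε)·√(2 ln(1.25/δ))·Δ₂(f), where 0 < ε ≤ 1 and δ ∈ (0,1). Then the mechanism D ↦ f(D) + U is (ε, δ)-differentially private. -/

import Mathlib

open MeasureTheory ProbabilityTheory

/-- Two datasets of size `n` are neighbors if their Hamming distance equals one. -/
def Neighbor {Z : Type*} [DecidableEq Z] {n : ℕ} (D D' : Fin n → Z) : Prop :=
  (Finset.univ.filter fun i => D i ≠ D' i).card = 1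

/-- A mechanism `M` satisfies `(ε, δ)`-differential privacy if for all neighboring
datasets `D, D'` and all measurable sets `S`, `P(M D ∈ S) ≤ exp ε * P(M D' ∈ S) + δ`. -/
def IsDP {Z : Type*} [DecidableEq Z] {n : ℕ} {Ω : Type*} [MeasurableSpace Ω]
    (M : (Fin n → Z) → Measure Ω) (ε δ : ℝ) : Prop :=
  ∀ D D' : Fin n → Z, Neighbor D D' → ∀ S : Set Ω, MeasurableSet S →
    M D S ≤ ENNReal.ofReal (Real.exp ε) * M D' S + ENNReal.ofReal δ

open Real Set
open scoped NNReal ENNReal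
set_option maxHeartbeats 1000000


lemma gauss_neg_map (v : ℝ≥0) :
    (gaussianReal 0 v).map (fun x => -x) = gaussianReal 0 v := by
  have h := gaussianReal_map_const_mul (μ := 0) (v := v) (-1)
  have h1 : (fun x : ℝ => (-1 : ℝ) * x) = fun x => -x := by funext x; ring
  rw [h1] at h
  have h2 : (⟨(-1:ℝ)^2, sq_nonneg ((-1:ℝ))⟩ : ℝ≥0) = 1 := by ext; norm_num
  rw [show (-1:ℝ) * 0 = 0 by ring] at h
  rw [h]; congr 1; ext; simp

lemma gauss_Iio (v : ℝ≥0) (a : ℝ) :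
    gaussianReal 0 v (Set.Iio a) = gaussianReal 0 v (Set.Ioi (-a)) := by
  conv_lhs => rw [← gauss_neg_map v]
  rw [Measure.map_apply measurable_neg measurableSet_Iio]
  congr 1
  ext x
  simp [neg_lt]

lemma gauss_half {v : ℝ≥0} (hv : v ≠ 0) (μ : ℝ) :
    gaussianReal μ v (Set.Ioi μ) = 1/2 := by
  have hmap : (gaussianReal 0 v).map (· + μ) = gaussianReal μ v := by
    rw [gaussianReal_map_add_const]; simp
  have h0 : gaussianReal μ v (Set.Ioi μ) = gaussianReal 0 v (Set.Ioi 0) := by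
    rw [← hmap, Measure.map_apply (measurable_add_const μ) measurableSet_Ioi]
    congr 1; ext x; simp
  have hsing : gaussianReal 0 v ({(0:ℝ)}) = 0 :=
    gaussianReal_absolutelyContinuous 0 hv (volume_singleton)
  have hsym : gaussianReal 0 v (Set.Iio 0) = gaussianReal 0 v (Set.Ioi 0) := by
    rw [gauss_Iio]; norm_num
  have hunion : gaussianReal 0 v (Set.Iio 0) + gaussianReal 0 v (Set.Ioi 0) = 1 := by
    rw [← measure_union ((Set.Iio_disjoint_Ici (le_refl 0)).mono_right Set.Ioi_subset_Ici_self) measurableSet_Ioi,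
      Set.Iio_union_Ioi, measure_compl (measurableSet_singleton 0) (measure_ne_top _ _), hsing]
    simp
  rw [h0]
  rw [hsym] at hunion
  rw [ENNReal.eq_div_iff (by norm_num) (by norm_num), two_mul, hunion]


lemma gauss_tail {v : ℝ≥0} (hv : v ≠ 0) {τ : ℝ} (hτ : 0 ≤ τ) :
    gaussianReal 0 v (Set.Ioi τ) ≤ ENNReal.ofReal (Real.exp (-(τ^2)/(2*v)) / 2) := by
  have hvpos : (0:ℝ) < v := by positivity
  have hpt : ∀ x ∈ Set.Ioi τ, gaussianPDF 0 v x
      ≤ ENNReal.ofReal (Real.exp (-(τ^2)/(2*v))) * gaussianPDF τ v x := by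
    intro x hx
    rw [gaussianPDF, gaussianPDF, ← ENNReal.ofReal_mul (exp_nonneg _)]
    apply ENNReal.ofReal_le_ofReal
    rw [gaussianPDFReal, gaussianPDFReal, mul_comm (rexp _) _, mul_assoc (a := (√(2 * π * (v:ℝ)))⁻¹), ← Real.exp_add]
    apply mul_le_mul_of_nonneg_left _ (by positivity)
    apply Real.exp_le_exp.mpr
    rw [← add_div, div_le_div_iff₀ (by positivity) (by positivity)]
    have hx' : τ ≤ x := (Set.mem_Ioi.mp hx).le
    nlinarith [mul_nonneg hτ (sub_nonneg.mpr hx')]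
  calc gaussianReal 0 v (Set.Ioi τ)
      = ∫⁻ x in Set.Ioi τ, gaussianPDF 0 v x := gaussianReal_apply _ hv _
    _ ≤ ∫⁻ x in Set.Ioi τ, ENNReal.ofReal (Real.exp (-(τ^2)/(2*v))) * gaussianPDF τ v x :=
        setLIntegral_mono ((measurable_gaussianPDF _ _).const_mul _) hpt
    _ = ENNReal.ofReal (Real.exp (-(τ^2)/(2*v))) * gaussianReal τ v (Set.Ioi τ) := by
        rw [lintegral_const_mul _ (measurable_gaussianPDF _ _), gaussianReal_apply _ hv]
    _ = ENNReal.ofReal (Real.exp (-(τ^2)/(2*v))) * ENNReal.ofReal (1/2) := by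
        rw [gauss_half hv]
        norm_num [ENNReal.ofReal_div_of_pos]
    _ = ENNReal.ofReal (Real.exp (-(τ^2)/(2*v)) / 2) := by
        rw [← ENNReal.ofReal_mul (exp_nonneg _)]
        ring_nf

lemma gauss_split {v : ℝ≥0} (hv : v ≠ 0) {ε : ℝ} (hε : 0 ≤ ε) (m m' : ℝ) (S : Set ℝ) :
    gaussianReal m v S ≤ ENNReal.ofReal (Real.exp ε) * gaussianReal m' v S
      + gaussianReal m v {x | ε * v + (m - m')^2/2 < (m - m') * (x - m')} := by
  have hvpos : (0:ℝ) < v := by positivity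
  set B := {x : ℝ | ε * v + (m - m')^2/2 < (m - m') * (x - m')} with hBdef
  have hpt : ∀ x ∉ B, gaussianPDF m v x ≤ ENNReal.ofReal (Real.exp ε) * gaussianPDF m' v x := by
    intro x hx
    rw [Set.mem_setOf_eq, not_lt] at hx
    rw [gaussianPDF, gaussianPDF, ← ENNReal.ofReal_mul (exp_nonneg _)]
    apply ENNReal.ofReal_le_ofReal
    rw [gaussianPDFReal, gaussianPDFReal, mul_comm (rexp _) _, mul_assoc (a := (√(2 * π * (v:ℝ)))⁻¹), ← Real.exp_add]
    apply mul_le_mul_of_nonneg_left _ (by positivity)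
    apply Real.exp_le_exp.mpr
    have hsq : (x - m)^2 = (x - m')^2 - 2*(m - m')*(x - m') + (m - m')^2 := by ring
    have hkey : (x - m')^2 - (x - m)^2 ≤ 2*(v:ℝ)*ε := by nlinarith
    have e1 : -(x - m)^2/(2*(v:ℝ)) = ((x - m')^2 - (x - m)^2)/(2*v) + (-(x - m')^2/(2*v)) := by
      ring
    have e2 : ((x - m')^2 - (x - m)^2)/(2*(v:ℝ)) ≤ ε := by
      rw [div_le_iff₀ (by positivity)]; linarith
    linarith
  calc gaussianReal m v S = ∫⁻ x in S, gaussianPDF m v x := gaussianReal_apply _ hv _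
    _ ≤ ∫⁻ x in (S \ B) ∪ (S ∩ B), gaussianPDF m v x :=
        lintegral_mono_set (by rw [Set.diff_union_inter])
    _ ≤ (∫⁻ x in S \ B, gaussianPDF m v x) + ∫⁻ x in S ∩ B, gaussianPDF m v x :=
        lintegral_union_le _ _ _
    _ ≤ ENNReal.ofReal (Real.exp ε) * gaussianReal m' v S + gaussianReal m v B := by
        gcongr
        · calc ∫⁻ x in S \ B, gaussianPDF m v x
              ≤ ∫⁻ x in S \ B, ENNReal.ofReal (Real.exp ε) * gaussianPDF m' v x :=
                setLIntegral_mono ((measurable_gaussianPDF _ _).const_mul _)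
                  (fun x hx => hpt x hx.2)
            _ = ENNReal.ofReal (Real.exp ε) * ∫⁻ x in S \ B, gaussianPDF m' v x := by
                rw [lintegral_const_mul _ (measurable_gaussianPDF _ _)]
            _ ≤ ENNReal.ofReal (Real.exp ε) * gaussianReal m' v S := by
                rw [gaussianReal_apply _ hv]
                exact mul_le_mul_right (lintegral_mono_set Set.diff_subset) _
        · rw [gaussianReal_apply _ hv]
          exact lintegral_mono_set Set.inter_subset_right


lemma gauss_bad_bound {ε δ Δ σ : ℝ} (hε : 0 < ε) (hε1 : ε ≤ 1)
    (hδ0 : 0 < δ) (hδ1 : δ < 1) (m m' : ℝ) (hc : m ≠ m') (hcΔ : |m - m'| ≤ Δ)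
    (hσ : (1 / ε) * Real.sqrt (2 * Real.log (1.25 / δ)) * Δ ≤ σ) :
    gaussianReal m ((σ^2).toNNReal)
      {x | ε * (((σ^2).toNNReal : ℝ≥0) : ℝ) + (m - m')^2/2 < (m - m') * (x - m')}
      ≤ ENNReal.ofReal δ := by
  set L := Real.log (1.25 / δ) with hL
  have hLpos : 0 < L := Real.log_pos (by rw [lt_div_iff₀ hδ0]; linarith)
  clear_value L
  have hcabs : 0 < |m - m'| := abs_pos.mpr (sub_ne_zero.mpr hc)
  have hΔpos : 0 < Δ := lt_of_lt_of_le hcabs hcΔ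
  have hσpos : 0 < σ := lt_of_lt_of_le (by positivity) hσ
  set v : ℝ≥0 := (σ^2).toNNReal with hvdef
  have hvr : (v:ℝ) = σ^2 := Real.coe_toNNReal _ (sq_nonneg σ)
  have hvpos : (0:ℝ) < v := by rw [hvr]; positivity
  have hv0 : v ≠ 0 := by
    intro h; rw [h] at hvpos; simp at hvpos
  clear_value v
  set c := m - m' with hcdef
  have hc0 : c ≠ 0 := sub_ne_zero.mpr hc
  have habs : |c| ≠ 0 := hcabs.ne'
  -- key numeric: 2 L Δ² ≤ ε² v
  have hkey : 2*L*Δ^2 ≤ ε^2 * (v:ℝ) := by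
    have h2 : ((1/ε) * Real.sqrt (2*L) * Δ)^2 ≤ σ^2 :=
      pow_le_pow_left₀ (by positivity) hσ 2
    rw [mul_pow, mul_pow, Real.sq_sqrt (by positivity), div_pow, one_pow] at h2
    rw [hvr]
    have h3 := mul_le_mul_of_nonneg_left h2 (le_of_lt (by positivity : (0:ℝ) < ε^2))
    have h4 : ε^2 * (1/ε^2 * (2*L) * Δ^2) = 2*L*Δ^2 := by field_simp
    linarith [h3, h4.symm.le]
  -- recenter
  have hmap : gaussianReal m v = (gaussianReal 0 v).map (· + m) := by
    rw [gaussianReal_map_add_const]; simp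
  have hBset : MeasurableSet {x:ℝ | ε*(v:ℝ) + c^2/2 < c * (x - m')} :=
    measurableSet_lt measurable_const ((measurable_id.sub_const _).const_mul _)
  rw [hmap, Measure.map_apply (measurable_add_const m) hBset]
  have hpre : (· + m) ⁻¹' {x | ε*(v:ℝ) + c^2/2 < c * (x - m')}
      = {y | ε*(v:ℝ) - c^2/2 < c * y} := by
    ext y
    simp only [Set.mem_preimage, Set.mem_setOf_eq]
    have he : c * (y + m - m') = c * y + c^2 := by rw [hcdef]; ring
    rw [he]
    constructor <;> intro h <;> linarith
  rw [hpre]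
  set t := ε*(v:ℝ) - c^2/2 with ht
  clear_value t
  have hone : gaussianReal 0 v {y | t < c * y} = gaussianReal 0 v (Set.Ioi (t/|c|)) := by
    rcases hc0.lt_or_gt with hneg | hpos
    · have hset : {y:ℝ | t < c * y} = Set.Iio (t/c) := by
        ext y
        simp only [Set.mem_setOf_eq, Set.mem_Iio]
        rw [lt_div_iff_of_neg hneg, mul_comm]
      rw [hset, gauss_Iio]
      congr 1
      rw [abs_of_neg hneg, div_neg]
    · have hset : {y:ℝ | t < c * y} = Set.Ioi (t/c) := by
        ext y
        simp only [Set.mem_setOf_eq, Set.mem_Ioi]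
        rw [div_lt_iff₀ hpos, mul_comm]
      rw [hset, abs_of_pos hpos]
  rw [hone]
  set τ0 : ℝ := ε*(v:ℝ)/Δ - Δ/2 with hτ0
  clear_value τ0
  have hττ0 : τ0 ≤ t/|c| := by
    have h1 : t/|c| = ε*(v:ℝ)/|c| - |c|/2 := by
      rw [ht, ← sq_abs c]
      field_simp
    rw [h1, hτ0]
    have h2 : ε*(v:ℝ)/Δ ≤ ε*(v:ℝ)/|c| := by
      apply div_le_div_of_nonneg_left (by positivity) hcabs hcΔ
    linarith
  refine le_trans (measure_mono (Set.Ioi_subset_Ioi hττ0)) ?_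
  by_cases h0 : 0 ≤ τ0
  · refine le_trans (gauss_tail hv0 h0) (ENNReal.ofReal_le_ofReal ?_)
    have hnum : L - 1/2 ≤ τ0^2/(2*(v:ℝ)) := by
      rw [le_div_iff₀ (by positivity)]
      have hτ0e : τ0 = (2*ε*(v:ℝ) - Δ^2)/(2*Δ) := by
        rw [hτ0]; field_simp
      rw [hτ0e, div_pow, le_div_iff₀ (by positivity)]
      have h2 := mul_le_mul_of_nonneg_left hkey (show (0:ℝ) ≤ 4*(v:ℝ) by positivity)
      have h3 : (0:ℝ) ≤ 4*(v:ℝ)*Δ^2*(1-ε) := by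
        have : (0:ℝ) ≤ 1 - ε := by linarith
        positivity
      nlinarith [h2, h3, sq_nonneg ((Δ:ℝ)^2)]
    have hlogsum : L + Real.log (2*δ) = Real.log (5/2) := by
      rw [hL, ← Real.log_mul (by positivity) (by positivity)]
      congr 1
      field_simp
      ring
    have hlog52 : (1/2:ℝ) ≤ Real.log (5/2) := by
      have h := Real.log_le_sub_one_of_pos (show (0:ℝ) < (5/2)⁻¹ by norm_num)
      rw [Real.log_inv] at h
      norm_num at h ⊢
      linarith
    have hexp : -(τ0^2)/(2*(v:ℝ)) ≤ Real.log (2*δ) := by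
      have he : -(τ0^2)/(2*(v:ℝ)) = -(τ0^2/(2*(v:ℝ))) := by ring
      rw [he]
      linarith
    calc rexp (-(τ0^2)/(2*(v:ℝ))) / 2 ≤ rexp (Real.log (2*δ)) / 2 := by
          have := Real.exp_le_exp.mpr hexp
          linarith
      _ = δ := by rw [Real.exp_log (by linarith)]; ring
  · push_neg at h0
    have hεv : ε*(v:ℝ) < Δ^2/2 := by
      have h0' : ε*(v:ℝ)/Δ < Δ/2 := by rw [hτ0] at h0; linarith
      rw [div_lt_iff₀ hΔpos] at h0'
      nlinarith [h0']
    have hLq : L < ε/4 := by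
      have h1 := mul_lt_mul_of_pos_left hεv hε
      nlinarith [hkey, h1, hΔpos, sq_nonneg Δ]
    have hδbig : (15/16:ℝ) < δ := by
      have h2 : L < 1/4 := by linarith
      have h3 : (1.25:ℝ)/δ < Real.exp (1/4) := by
        have hh : rexp L < rexp (1/4) := Real.exp_lt_exp.mpr h2
        rw [hL, Real.exp_log (by positivity)] at hh
        exact hh
      have h5 : (3:ℝ)/4 ≤ rexp (-(1/4)) := by
        have := Real.add_one_le_exp (-(1/4:ℝ)); linarith
      rw [Real.exp_neg] at h5
      have h6 : rexp (1/4) * (rexp (1/4))⁻¹ = 1 := mul_inv_cancel₀ (Real.exp_pos _).ne'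
      have h4 : Real.exp (1/4) ≤ 4/3 := by nlinarith [h5, h6, Real.exp_pos (1/4:ℝ)]
      rw [div_lt_iff₀ hδ0] at h3
      nlinarith [h3, h4, hδ0]
    -- split Ioi τ0
    rw [show Set.Ioi τ0 = Set.Ioc τ0 0 ∪ Set.Ioi (0:ℝ) from (Set.Ioc_union_Ioi_eq_Ioi h0.le).symm]
    refine le_trans (measure_union_le _ _) ?_
    have hIoc : gaussianReal 0 v (Set.Ioc τ0 0)
        ≤ ENNReal.ofReal ((Real.sqrt (2*π*(v:ℝ)))⁻¹ * (-τ0)) := by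
      rw [gaussianReal_apply _ hv0]
      calc ∫⁻ x in Set.Ioc τ0 0, gaussianPDF 0 v x
          ≤ ∫⁻ _x in Set.Ioc τ0 0, ENNReal.ofReal ((Real.sqrt (2*π*(v:ℝ)))⁻¹) := by
            apply setLIntegral_mono measurable_const
            intro x _
            rw [gaussianPDF, gaussianPDFReal]
            apply ENNReal.ofReal_le_ofReal
            apply mul_le_of_le_one_right (by positivity)
            exact Real.exp_le_one_iff.mpr
              (div_nonpos_of_nonpos_of_nonneg (neg_nonpos.mpr (by positivity)) (by positivity))
        _ = ENNReal.ofReal ((Real.sqrt (2*π*(v:ℝ)))⁻¹) * volume (Set.Ioc τ0 0) :=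
            setLIntegral_const _ _
        _ = ENNReal.ofReal ((Real.sqrt (2*π*(v:ℝ)))⁻¹ * (-τ0)) := by
            rw [Real.volume_Ioc, ← ENNReal.ofReal_mul (by positivity)]
            norm_num
    refine le_trans (add_le_add hIoc (le_of_eq (gauss_half hv0 0))) ?_
    -- final numeric bound
    have hsqrtv : Real.sqrt (2*π*(v:ℝ)) = Real.sqrt (2*π) * σ := by
      rw [hvr, Real.sqrt_mul (by positivity), Real.sqrt_sq hσpos.le]
    have h2 : Real.sqrt (2*L) * Δ ≤ σ := by
      have ha := mul_le_mul_of_nonneg_left hσ hε.le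
      have hb : ε * ((1/ε) * Real.sqrt (2*L) * Δ) = Real.sqrt (2*L) * Δ := by
        field_simp
      have hc2 : ε * σ ≤ σ := by nlinarith [hσpos]
      linarith
    have hA : (8:ℝ)/7 ≤ Real.sqrt (2*π) * Real.sqrt (2*L) := by
      rw [← Real.sqrt_mul (by positivity)]
      have hπ : (3:ℝ) < π := Real.pi_gt_three
      have hL5 : (1/5:ℝ) ≤ L := by
        have hge : (1.25:ℝ) ≤ 1.25/δ := by
          rw [le_div_iff₀ hδ0]; nlinarith
        have hlogmono : Real.log 1.25 ≤ L := by
          rw [hL]; exact Real.log_le_log (by norm_num) hge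
        have h := Real.log_le_sub_one_of_pos (show (0:ℝ) < (1.25:ℝ)⁻¹ by norm_num)
        rw [Real.log_inv] at h
        norm_num at h
        linarith
      have h6 : ((8:ℝ)/7)^2 ≤ (2*π)*(2*L) := by nlinarith
      have := Real.sqrt_le_sqrt h6
      rwa [Real.sqrt_sq (by norm_num : (0:ℝ) ≤ 8/7)] at this
    have hCb : (Real.sqrt (2*π*(v:ℝ)))⁻¹ * (-τ0) ≤ 7/16 := by
      rw [hsqrtv, inv_mul_le_iff₀ (mul_pos (Real.sqrt_pos.mpr (by positivity)) hσpos)]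
      have hτ0b : -τ0 ≤ Δ/2 := by
        rw [hτ0]
        have : (0:ℝ) ≤ ε*(v:ℝ)/Δ := by positivity
        linarith
      have hs2π : (0:ℝ) < Real.sqrt (2*π) := by positivity
      nlinarith [mul_le_mul_of_nonneg_left h2 hs2π.le,
        mul_le_mul_of_nonneg_right hA hΔpos.le]
    have hhalf : (1/2 : ℝ≥0∞) = ENNReal.ofReal (1/2) := by
      rw [ENNReal.ofReal_div_of_pos (by norm_num)]
      norm_num
    rw [hhalf, ← ENNReal.ofReal_add (mul_nonneg (by positivity) (by linarith)) (by norm_num)]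
    apply ENNReal.ofReal_le_ofReal
    linarith

set_option maxHeartbeats 1000000

/-- Gaussian mechanism: if `f` has ℓ₂-sensitivity at most `Δ` over neighboring datasets and
`σ ≥ (1/ε)·√(2 ln(1.25/δ))·Δ` with `0 < ε ≤ 1`, `δ ∈ (0,1)`, then `D ↦ f(D) + U` with
`U ∼ N(0, σ²)` is `(ε, δ)`-differentially private. -/
theorem dp_gaussian_mechanism {Z : Type*} [DecidableEq Z] {n : ℕ}
    (f : (Fin n → Z) → ℝ) (ε δ Δ σ : ℝ) (hε : 0 < ε) (hε1 : ε ≤ 1)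
    (hδ : δ ∈ Set.Ioo (0 : ℝ) 1)
    (hΔ : ∀ D D' : Fin n → Z, Neighbor D D' → |f D - f D'| ≤ Δ)
    (hσ : σ ≥ (1 / ε) * Real.sqrt (2 * Real.log (1.25 / δ)) * Δ) :
    IsDP (fun D => gaussianReal (f D) ((σ ^ 2).toNNReal)) ε δ := by
  obtain ⟨hδ0, hδ1⟩ := hδ
  intro D D' hN S hS
  simp only
  by_cases hceq : f D = f D'
  · rw [hceq]
    have h1 : (1:ℝ≥0∞) ≤ ENNReal.ofReal (Real.exp ε) := by
      rw [← ENNReal.ofReal_one]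
      exact ENNReal.ofReal_le_ofReal (by linarith [Real.add_one_le_exp ε])
    calc gaussianReal (f D') ((σ ^ 2).toNNReal) S
        ≤ ENNReal.ofReal (Real.exp ε) * gaussianReal (f D') ((σ ^ 2).toNNReal) S :=
          le_mul_of_one_le_left (by positivity) h1
      _ ≤ _ := le_self_add
  · have hd := hΔ D D' hN
    have hΔpos : 0 < Δ := lt_of_lt_of_le (abs_pos.mpr (sub_ne_zero.mpr hceq)) hd
    have hLpos : 0 < Real.log (1.25 / δ) := Real.log_pos (by rw [lt_div_iff₀ hδ0]; linarith)
    have hσpos : 0 < σ := lt_of_lt_of_le (by positivity) hσ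
    have hv0 : (σ^2).toNNReal ≠ 0 := by
      intro h
      have : ((σ^2).toNNReal : ℝ) = σ^2 := Real.coe_toNNReal _ (sq_nonneg σ)
      rw [h] at this
      simp at this
      nlinarith
    refine le_trans (gauss_split hv0 hε.le (f D) (f D') S) ?_
    exact add_le_add_right (gauss_bad_bound hε hε1 hδ0 hδ1 (f D) (f D') hceq hd hσ) _
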